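/- Let X̂, X ∈ ℝ^{n×d} be matrices all of whose rows are nonzero, and let W ∈ O(d) be an orthogonal matrix. Let D(Z) denote the diagonal matrix whose i-th diagonal entry is the Euclidean norm of the i-th row of Z, and let P(Z) = D(Z)^{−1} Z denote the matrix whose rows are the rows of Z projected onto the unit sphere. Then ‖ P(X̂) W − P(X) ‖_F ≤ 2 ‖ X̂ W − X ‖_F ‖ D(X̂)^{−1} ‖, where ‖ D(X̂)^{−1} ‖ = 1 / min_i ‖X̂_i‖ is the spectral norm of D(X̂)^{−1}. -/

import Mathlib

open MeasureTheory Matrix Filter ProbabilityTheory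

noncomputable section

/-- Frobenius norm of a real matrix. -/
def frob {m n : ℕ} (M : Matrix (Fin m) (Fin n) ℝ) : ℝ :=
  Real.sqrt (∑ i, ∑ j, (M i j) ^ 2)

open Classical in
/-- Sort a finite family of reals in decreasing order. -/
def sortedDesc {n : ℕ} (f : Fin n → ℝ) : List ℝ :=
  (List.ofFn f).mergeSort (fun a b => decide (b ≤ a))

/-- The k-th largest singular value (1-indexed) of a real square matrix;
`0` if `k` exceeds the dimension. -/
def sval {n : ℕ} (M : Matrix (Fin n) (Fin n) ℝ) (k : ℕ) : ℝ :=
  (sortedDesc fun i =>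
    Real.sqrt ((show (Mᵀ * M).IsHermitian by
      simpa [Matrix.conjTranspose_eq_transpose_of_trivial] using
        Matrix.isHermitian_conjTranspose_mul_self M).eigenvalues i)).getD (k - 1) 0

/-- Spectral norm: the largest singular value. -/
def spec {n : ℕ} (M : Matrix (Fin n) (Fin n) ℝ) : ℝ := sval M 1

/-- Maximum row sum `δ(M)`. -/
def delta {n : ℕ} (M : Matrix (Fin n) (Fin n) ℝ) : ℝ := ⨆ i, ∑ j, M i j

/-- `γ₁(M) = min_{i ≤ d} (σ_i(M) − σ_{i+1}(M)) / δ(M)`. -/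
def gamma1 {n : ℕ} (M : Matrix (Fin n) (Fin n) ℝ) (d : ℕ) : ℝ :=
  ⨅ i : Fin d, (sval M (i.1 + 1) - sval M (i.1 + 2)) / delta M

/-- `γ₂(M) = (σ_d(M) − σ_{d+1}(M)) / δ(M)`. -/
def gamma2 {n : ℕ} (M : Matrix (Fin n) (Fin n) ℝ) (d : ℕ) : ℝ :=
  (sval M d - sval M (d + 1)) / delta M

/-- Orthogonal matrix predicate. -/
def IsOrtho {d : ℕ} (W : Matrix (Fin d) (Fin d) ℝ) : Prop :=
  W * Wᵀ = 1 ∧ Wᵀ * W = 1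

/-- `min_{W ∈ O(d)} ‖X W − Y‖_F` (as an infimum). -/
def procrustes {n d : ℕ} (X Y : Matrix (Fin n) (Fin d) ℝ) : ℝ :=
  ⨅ W : {W : Matrix (Fin d) (Fin d) ℝ // IsOrtho W}, frob (X * W.1 - Y)

/-- A latent position matrix: `X Xᵀ` has entries in `[0,1]` and `X` has full column rank `d`. -/
def IsLatentPos {n d : ℕ} (X : Matrix (Fin n) (Fin d) ℝ) : Prop :=
  (∀ i j, (X * Xᵀ) i j ∈ Set.Icc (0 : ℝ) 1) ∧ X.rank = d

/-- `A ~ RDPG(X)` with `P = X Xᵀ`: a random symmetric hollow 0/1 matrix whose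
upper-triangular entries are independent Bernoulli with success probabilities `P i j`. -/
def IsRDPG {Ω : Type*} [MeasurableSpace Ω] (μ : Measure Ω) {n : ℕ}
    (P : Matrix (Fin n) (Fin n) ℝ) (A : Ω → Matrix (Fin n) (Fin n) ℝ) : Prop :=
  (∀ ω, (A ω)ᵀ = A ω) ∧
  (∀ ω i, A ω i i = 0) ∧
  (∀ ω i j, A ω i j = 0 ∨ A ω i j = 1) ∧
  (∀ i j, Measurable fun ω => A ω i j) ∧
  iIndepFun
    (fun (p : {p : Fin n × Fin n // p.1 < p.2}) ω => A ω p.1.1 p.1.2) μ ∧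
  (∀ i j : Fin n, i < j → μ {ω | A ω i j = 1} = ENNReal.ofReal (P i j))

/-- The positive semidefinite square root `|A| = (Aᵀ A)^{1/2}`. -/
def absMat {n : ℕ} (A : Matrix (Fin n) (Fin n) ℝ) : Matrix (Fin n) (Fin n) ℝ :=
  (Matrix.posSemidef_conjTranspose_mul_self A).1.eigenvectorUnitary.1 *
    Matrix.diagonal ((↑) ∘ Real.sqrt ∘ (Matrix.posSemidef_conjTranspose_mul_self A).1.eigenvalues) *
    (star (Matrix.posSemidef_conjTranspose_mul_self A).1.eigenvectorUnitary : Matrix (Fin n) (Fin n) ℝ)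

/-- `U` is an `n × d` matrix of orthonormal eigenvectors of `M` for the eigenvalues
`σ₁(M) ≥ ⋯ ≥ σ_d(M)`. -/
def IsTopEigvecs {n : ℕ} (d : ℕ) (M : Matrix (Fin n) (Fin n) ℝ)
    (U : Matrix (Fin n) (Fin d) ℝ) : Prop :=
  Uᵀ * U = 1 ∧
  ∀ j : Fin d, M *ᵥ (fun i => U i j) = sval M (j.1 + 1) • (fun i => U i j)

/-- `Xh` is an adjacency spectral embedding of `A` into `ℝ^d`:
`Xh = U_A S_A^{1/2}` for some top-`d` orthonormal eigenvector matrix `U_A` of `|A|`. -/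
def IsASE {n d : ℕ} (A : Matrix (Fin n) (Fin n) ℝ) (Xh : Matrix (Fin n) (Fin d) ℝ) : Prop :=
  ∃ U : Matrix (Fin n) (Fin d) ℝ, IsTopEigvecs d (absMat A) U ∧
    Xh = U * Matrix.diagonal (fun j : Fin d => Real.sqrt (sval A (j.1 + 1)))

/-- The diagonal matrix `D` with `D_ii = ∑_{k ≠ i} P_ik (1 − P_ik)`. -/
def Dmat {n : ℕ} (P : Matrix (Fin n) (Fin n) ℝ) : Matrix (Fin n) (Fin n) ℝ :=
  Matrix.diagonal fun i => ∑ k, if k = i then 0 else P i k * (1 - P i k)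

/-- The diagonal matrix `S_M^{-1/2}` of inverse square roots of the top-`d`
singular values of `M`. -/
def SinvHalf {n : ℕ} (d : ℕ) (M : Matrix (Fin n) (Fin n) ℝ) : Matrix (Fin d) (Fin d) ℝ :=
  Matrix.diagonal fun j : Fin d => (Real.sqrt (sval M (j.1 + 1)))⁻¹

/-- `C(X) = (tr S_P^{-1/2} U_Pᵀ E[(A − P)²] U_P S_P^{-1/2})^{1/2}`, where
`E[(A − P)²] = Dmat P`. -/
def CX {n d : ℕ} (P : Matrix (Fin n) (Fin n) ℝ) (U : Matrix (Fin n) (Fin d) ℝ) : ℝ :=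
  Real.sqrt (SinvHalf d P * Uᵀ * Dmat P * U * SinvHalf d P).trace

/-- `P` has `d` distinct positive eigenvalues (and the rest are zero). -/
def DistinctPosEigs {n : ℕ} (P : Matrix (Fin n) (Fin n) ℝ) (d : ℕ) : Prop :=
  (∀ i : ℕ, 1 ≤ i → i < d → sval P (i + 1) < sval P i) ∧
  0 < sval P d ∧ sval P (d + 1) = 0

/-- Assumption 1 on a sequence of edge-probability matrices. -/
def Assumption1 (d : ℕ) (P : (n : ℕ) → Matrix (Fin n) (Fin n) ℝ) : Prop :=
  (∀ n, (P n).rank = d ∧ DistinctPosEigs (P n) d) ∧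
  ∃ ε > (0 : ℝ), ∃ c₀ > (0 : ℝ), ∃ n₀ : ℕ, ∀ n, n₀ ≤ n →
    c₀ < gamma1 (P n) d ∧ (Real.log n) ^ ((2 : ℝ) + ε) < delta (P n)

/-- Euclidean norm of the `i`-th row of `Z`. -/
def rowNorm {n d : ℕ} (Z : Matrix (Fin n) (Fin d) ℝ) (i : Fin n) : ℝ :=
  Real.sqrt (∑ j, (Z i j) ^ 2)

/-- `𝒫(Z)`: project each row of `Z` onto the unit sphere. -/
def rowNormalize {n d : ℕ} (Z : Matrix (Fin n) (Fin d) ℝ) : Matrix (Fin n) (Fin d) ℝ :=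
  fun i j => Z i j / rowNorm Z i

/-- `‖𝒟(Z)^{-1}‖ = 1 / min_i ‖Z_i‖`. -/
def invMinRow {n d : ℕ} (Z : Matrix (Fin n) (Fin d) ℝ) : ℝ :=
  (⨅ i, rowNorm Z i)⁻¹

/-- Assumption 2 on a sequence of latent position matrices. -/
def Assumption2 (d : ℕ) (X : (n : ℕ) → Matrix (Fin n) (Fin d) ℝ) : Prop :=
  (∀ n, (X n * (X n)ᵀ).rank = d) ∧
  ∃ ε₁ > (0 : ℝ), ∃ ε₂ > (0 : ℝ), ∃ c₀ > (0 : ℝ), ∃ n₀ : ℕ, ∀ n, n₀ ≤ n →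
    c₀ < gamma1 (X n * (X n)ᵀ) d ∧
    Real.sqrt n * (Real.log n) ^ (ε₁ : ℝ) < delta (X n * (X n)ᵀ) ∧
    (Real.log n / Real.sqrt (delta (X n * (X n)ᵀ))) ^ ((1 : ℝ) - ε₂) <
      ⨅ i, rowNorm (X n) i

/-- The test statistic for the equality (up to rotation) test. -/
def Tstat {n : ℕ} (d : ℕ) (A B : Matrix (Fin n) (Fin n) ℝ)
    (Xh Yh : Matrix (Fin n) (Fin d) ℝ) : ℝ :=
  procrustes Xh Yh /
    (Real.sqrt (d * (gamma2 A d)⁻¹) + Real.sqrt (d * (gamma2 B d)⁻¹))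

/-- The test statistic for the scaling test. -/
def TstatScale {n : ℕ} (d : ℕ) (A B : Matrix (Fin n) (Fin n) ℝ)
    (Xh Yh : Matrix (Fin n) (Fin d) ℝ) : ℝ :=
  (⨅ W : {W : Matrix (Fin d) (Fin d) ℝ // IsOrtho W},
      frob ((frob Xh)⁻¹ • (Xh * W.1) - (frob Yh)⁻¹ • Yh)) /
  (2 * Real.sqrt (d * (gamma2 A d)⁻¹) / frob Xh +
    2 * Real.sqrt (d * (gamma2 B d)⁻¹) / frob Yh)

/-- The test statistic for the diagonal-transformation test. -/
def TstatDiag {n : ℕ} (d : ℕ) (A B : Matrix (Fin n) (Fin n) ℝ)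
    (Xh Yh : Matrix (Fin n) (Fin d) ℝ) : ℝ :=
  procrustes (rowNormalize Xh) (rowNormalize Yh) /
  (2 * Real.sqrt (d * (gamma2 A d)⁻¹) * invMinRow Xh +
    2 * Real.sqrt (d * (gamma2 B d)⁻¹) * invMinRow Yh)

end

private lemma key_vec {d : ℕ} (u v : EuclideanSpace ℝ (Fin d)) (hu : u ≠ 0) (hv : v ≠ 0) :
    ‖‖u‖⁻¹ • u - ‖v‖⁻¹ • v‖ ≤ 2 * ‖u - v‖ / ‖u‖ := by
  have hu' : (0:ℝ) < ‖u‖ := norm_pos_iff.mpr hu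
  have hv' : (0:ℝ) < ‖v‖ := norm_pos_iff.mpr hv
  have h1 : ‖u‖⁻¹ • u - ‖v‖⁻¹ • v = ‖u‖⁻¹ • (u - v) + (‖u‖⁻¹ - ‖v‖⁻¹) • v := by
    rw [smul_sub, sub_smul]; abel
  have h2 : |‖u‖⁻¹ - ‖v‖⁻¹| = |‖v‖ - ‖u‖| / (‖u‖ * ‖v‖) := by
    rw [show ‖u‖⁻¹ - ‖v‖⁻¹ = (‖v‖ - ‖u‖) / (‖u‖ * ‖v‖) by field_simp,
      abs_div, abs_of_pos (mul_pos hu' hv')]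
  have h3 : |‖v‖ - ‖u‖| ≤ ‖u - v‖ := by
    rw [← norm_neg (u - v), neg_sub]; exact abs_norm_sub_norm_le v u
  rw [h1]
  calc ‖‖u‖⁻¹ • (u - v) + (‖u‖⁻¹ - ‖v‖⁻¹) • v‖
      ≤ ‖‖u‖⁻¹ • (u - v)‖ + ‖(‖u‖⁻¹ - ‖v‖⁻¹) • v‖ := norm_add_le _ _
    _ = ‖u‖⁻¹ * ‖u - v‖ + |‖u‖⁻¹ - ‖v‖⁻¹| * ‖v‖ := by
        rw [norm_smul, norm_smul, Real.norm_eq_abs, Real.norm_eq_abs,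
          abs_of_pos (inv_pos.mpr hu')]
    _ ≤ ‖u‖⁻¹ * ‖u - v‖ + (‖u - v‖ / (‖u‖ * ‖v‖)) * ‖v‖ := by
        gcongr
        rw [h2]
        gcongr
    _ = 2 * ‖u - v‖ / ‖u‖ := by field_simp; ring

private lemma enorm_eq {d : ℕ} (x : EuclideanSpace ℝ (Fin d)) :
    ‖x‖ = Real.sqrt (∑ j, (x j) ^ 2) := by
  rw [EuclideanSpace.norm_eq]
  congr 1
  exact Finset.sum_congr rfl fun j _ => by rw [Real.norm_eq_abs, sq_abs]

private lemma key_sum {d : ℕ} (u v : Fin d → ℝ)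
    (hu : (0:ℝ) < Real.sqrt (∑ j, u j ^ 2)) (hv : (0:ℝ) < Real.sqrt (∑ j, v j ^ 2)) :
    ∑ j, ((Real.sqrt (∑ k, u k ^ 2))⁻¹ * u j - (Real.sqrt (∑ k, v k ^ 2))⁻¹ * v j) ^ 2
      ≤ (2 / Real.sqrt (∑ k, u k ^ 2)) ^ 2 * ∑ j, (u j - v j) ^ 2 := by
  set U : EuclideanSpace ℝ (Fin d) := WithLp.toLp 2 u with hU
  set V : EuclideanSpace ℝ (Fin d) := WithLp.toLp 2 v with hV
  have hUn : ‖U‖ = Real.sqrt (∑ k, u k ^ 2) := enorm_eq U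
  have hVn : ‖V‖ = Real.sqrt (∑ k, v k ^ 2) := enorm_eq V
  have hU0 : U ≠ 0 := by intro h; rw [h, norm_zero] at hUn; exact absurd hUn.symm (ne_of_gt hu)
  have hV0 : V ≠ 0 := by intro h; rw [h, norm_zero] at hVn; exact absurd hVn.symm (ne_of_gt hv)
  have hk := key_vec U V hU0 hV0
  have hL : ‖‖U‖⁻¹ • U - ‖V‖⁻¹ • V‖ ^ 2
      = ∑ j, ((Real.sqrt (∑ k, u k ^ 2))⁻¹ * u j - (Real.sqrt (∑ k, v k ^ 2))⁻¹ * v j) ^ 2 := by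
    rw [enorm_eq, Real.sq_sqrt (by positivity)]
    exact Finset.sum_congr rfl fun j _ => by
      simp [hUn, hVn]; rfl
  have hR : (2 * ‖U - V‖ / ‖U‖) ^ 2
      = (2 / Real.sqrt (∑ k, u k ^ 2)) ^ 2 * ∑ j, (u j - v j) ^ 2 := by
    have : ‖U - V‖ ^ 2 = ∑ j, (u j - v j) ^ 2 := by
      rw [enorm_eq, Real.sq_sqrt (by positivity)]
      exact Finset.sum_congr rfl fun j _ => by simp [hU, hV]
    rw [hUn, div_pow, mul_pow, this]
    ring
  rw [← hL, ← hR]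
  exact pow_le_pow_left₀ (norm_nonneg _) hk 2

/-- Eq. `eq:projection-bound`: for matrices with nonzero rows and
`W` orthogonal, `‖𝒫(X̂) W − 𝒫(X)‖_F ≤ 2 ‖X̂ W − X‖_F ‖𝒟(X̂)^{-1}‖`. -/
theorem stmt17 {n d : ℕ}
    (Xh X : Matrix (Fin n) (Fin d) ℝ)
    (hXh : ∀ i, rowNorm Xh i ≠ 0) (hX : ∀ i, rowNorm X i ≠ 0)
    (W : Matrix (Fin d) (Fin d) ℝ) (hW : IsOrtho W) :
    frob (rowNormalize Xh * W - rowNormalize X) ≤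
      2 * frob (Xh * W - X) * invMinRow Xh := by
  have hpos : ∀ i, 0 < rowNorm Xh i := fun i =>
    lt_of_le_of_ne (Real.sqrt_nonneg _) (Ne.symm (hXh i))
  have hposX : ∀ i, 0 < rowNorm X i := fun i =>
    lt_of_le_of_ne (Real.sqrt_nonneg _) (Ne.symm (hX i))
  have hbdd : BddBelow (Set.range (rowNorm Xh)) :=
    ⟨0, by rintro _ ⟨i, rfl⟩; exact Real.sqrt_nonneg _⟩
  have hc0 : 0 ≤ invMinRow Xh := by
    unfold invMinRow
    apply inv_nonneg.mpr
    rcases isEmpty_or_nonempty (Fin n) with h | h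
    · simp [Real.iInf_of_isEmpty]
    · exact le_ciInf fun i => Real.sqrt_nonneg _
  have hinv : ∀ i, (rowNorm Xh i)⁻¹ ≤ invMinRow Xh := by
    intro i
    haveI : Nonempty (Fin n) := ⟨i⟩
    obtain ⟨i0, hi0⟩ := Finite.exists_min (rowNorm Xh)
    have hipos : 0 < ⨅ j, rowNorm Xh j :=
      lt_of_lt_of_le (hpos i0) (le_ciInf hi0)
    exact inv_anti₀ hipos (ciInf_le hbdd i)
  have hnormW : ∀ i, Real.sqrt (∑ j, ((Xh * W) i j) ^ 2) = rowNorm Xh i := by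
    intro i
    unfold rowNorm
    congr 1
    have h1 : ∀ (M : Matrix (Fin n) (Fin d) ℝ), (M * Mᵀ) i i = ∑ j, (M i j) ^ 2 := by
      intro M; simp [Matrix.mul_apply, sq]
    rw [← h1 (Xh * W), ← h1 Xh, Matrix.transpose_mul,
      show Xh * W * (Wᵀ * Xhᵀ) = Xh * (W * Wᵀ) * Xhᵀ by
        simp only [Matrix.mul_assoc], hW.1, Matrix.mul_one]
  have hrow : ∀ i, ∑ j, ((rowNormalize Xh * W - rowNormalize X) i j) ^ 2
      ≤ (2 * invMinRow Xh) ^ 2 * ∑ j, ((Xh * W - X) i j) ^ 2 := by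
    intro i
    have h := key_sum (fun j => (Xh * W) i j) (fun j => X i j)
      (by rw [hnormW i]; exact hpos i) (hposX i)
    rw [hnormW i] at h
    have hentry : ∀ j, (rowNormalize Xh * W - rowNormalize X) i j
        = (rowNorm Xh i)⁻¹ * (Xh * W) i j - (rowNorm X i)⁻¹ * X i j := by
      intro j
      simp only [Matrix.sub_apply, Matrix.mul_apply, rowNormalize]
      rw [Finset.mul_sum]
      congr 1
      · exact Finset.sum_congr rfl fun k _ => by ring
      · rw [div_eq_inv_mul]
    calc ∑ j, ((rowNormalize Xh * W - rowNormalize X) i j) ^ 2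
        = ∑ j, ((rowNorm Xh i)⁻¹ * (Xh * W) i j - (rowNorm X i)⁻¹ * X i j) ^ 2 :=
          Finset.sum_congr rfl fun j _ => by rw [hentry j]
      _ ≤ (2 / rowNorm Xh i) ^ 2 * ∑ j, ((Xh * W) i j - X i j) ^ 2 := h
      _ ≤ (2 * invMinRow Xh) ^ 2 * ∑ j, ((Xh * W - X) i j) ^ 2 := by
          simp only [Matrix.sub_apply]
          apply mul_le_mul_of_nonneg_right _ (by positivity)
          apply pow_le_pow_left₀ (div_nonneg (by norm_num) (le_of_lt (hpos i)))
          rw [div_eq_mul_inv]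
          exact mul_le_mul_of_nonneg_left (hinv i) (by norm_num)
  unfold frob
  calc Real.sqrt (∑ i, ∑ j, ((rowNormalize Xh * W - rowNormalize X) i j) ^ 2)
      ≤ Real.sqrt ((2 * invMinRow Xh) ^ 2 * ∑ i, ∑ j, ((Xh * W - X) i j) ^ 2) := by
        apply Real.sqrt_le_sqrt
        rw [Finset.mul_sum]
        exact Finset.sum_le_sum fun i _ => hrow i
    _ = 2 * Real.sqrt (∑ i, ∑ j, ((Xh * W - X) i j) ^ 2) * invMinRow Xh := by
        rw [Real.sqrt_mul (by positivity), Real.sqrt_sq (by positivity)]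
        ring
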